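/- Let B be a symmetric s×s real matrix, x* ∈ ℝˢ a strictly positive interior equilibrium of dx/dt = X(1 + Bx) (so 1 + Bx* = 0), and define V(x) = Σᵢ (xᵢ - x*ᵢ - x*ᵢ · log(xᵢ / x*ᵢ)) on the open positive orthant. Then along any solution x(t) in the positive orthant, d/dt V(x(t)) = (x(t) - x*)ᵀ B (x(t) - x*). In particular, if B is negative definite then V is nonincreasing along solutions and strictly decreasing away from x*. -/

import Mathlib

open Matrix BigOperators

/-- Along any positive solution of `dx/dt = X(1 + Bx)` with interior equilibrium `x*`,
the Goh function `V(x) = Σᵢ (xᵢ - x*ᵢ - x*ᵢ log(xᵢ/x*ᵢ))` satisfies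
`d/dt V(x(t)) = (x(t)-x*)ᵀ B (x(t)-x*)`; if `B` is negative definite this derivative
is `≤ 0`, and `< 0` whenever `x(t) ≠ x*`. -/
theorem stmt12 (s : ℕ) (B : Matrix (Fin s) (Fin s) ℝ) (hBsymm : B.IsSymm)
    (xs : Fin s → ℝ) (hxs : ∀ i, 0 < xs i)
    (heq : ∀ i, 1 + B.mulVec xs i = 0)
    (V : (Fin s → ℝ) → ℝ)
    (hV : V = fun x => ∑ i, (x i - xs i - xs i * Real.log (x i / xs i)))
    (x : ℝ → Fin s → ℝ) (hpos : ∀ t i, 0 < x t i)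
    (hx : ∀ t : ℝ, HasDerivAt x (fun i => x t i * (1 + B.mulVec (x t) i)) t) :
    (∀ t : ℝ, HasDerivAt (fun t => V (x t))
      ((x t - xs) ⬝ᵥ B.mulVec (x t - xs)) t) ∧
    ((∀ v : Fin s → ℝ, v ≠ 0 → v ⬝ᵥ B.mulVec v < 0) →
      ∀ t : ℝ, (x t - xs) ⬝ᵥ B.mulVec (x t - xs) ≤ 0 ∧
        (x t ≠ xs → (x t - xs) ⬝ᵥ B.mulVec (x t - xs) < 0)) := by
  constructor
  · intro t
    have hx' := hasDerivAt_pi.1 (hx t)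
    have hd : ∀ i : Fin s, HasDerivAt
        (fun t => x t i - xs i - xs i * Real.log (x t i / xs i))
        ((x t i - xs i) * (1 + B.mulVec (x t) i)) t := by
      intro i
      have h1 : HasDerivAt (fun t => x t i) (x t i * (1 + B.mulVec (x t) i)) t := hx' i
      have hne : x t i ≠ 0 := (hpos t i).ne'
      have hxsne : xs i ≠ 0 := (hxs i).ne'
      have h2 : HasDerivAt (fun t => Real.log (x t i / xs i))
          ((x t i * (1 + B.mulVec (x t) i) / xs i) / (x t i / xs i)) t :=
        (h1.div_const _).log (by positivity)
      have h3 := (h1.sub_const (xs i)).fun_sub (h2.const_mul (xs i))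
      convert h3 using 1
      · rfl
      · rfl
      field_simp
    subst hV
    have htot : HasDerivAt (fun t => ∑ i, (x t i - xs i - xs i * Real.log (x t i / xs i)))
        (∑ i, (x t i - xs i) * (1 + B.mulVec (x t) i)) t :=
      HasDerivAt.fun_sum (fun i _ => hd i)
    convert htot using 1
    unfold dotProduct
    apply Finset.sum_congr rfl
    intro i _
    have hxsi : B.mulVec xs i = -1 := by linarith [heq i]
    simp only [Matrix.mulVec_sub, Pi.sub_apply, hxsi]
    ring
  · intro hB t
    by_cases h : x t = xs
    · simp [h]
    · have hv : x t - xs ≠ 0 := sub_ne_zero.2 h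
      exact ⟨(hB _ hv).le, fun _ => hB _ hv⟩
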